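/- Let d be a positive integer and let X ⊆ ℝ^d be a compact set whose linear span is all of ℝ^d. Then there exists a probability measure ρ on X supported on a finite set of at most d(d+1)/2 points such that the d×d matrix V = E_{x∼ρ}[x·xᵀ] is invertible and, for every x' ∈ X, x'ᵀ·V⁻¹·x' ≤ d. -/

import Mathlib

open Matrix
open scoped Matrix

variable {d : ℕ}

lemma my_smul_vecMulVec (c : ℝ) (u v : Fin d → ℝ) :
    c • vecMulVec u v = vecMulVec (c • u) v := by
  ext i j; simp [vecMulVec_apply, mul_assoc]

lemma my_mul_vecMulVec (M : Matrix (Fin d) (Fin d) ℝ) (u v : Fin d → ℝ) :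
    M * vecMulVec u v = vecMulVec (M *ᵥ u) v := by
  ext i j
  simp only [Matrix.mul_apply, vecMulVec_apply, Matrix.mulVec, dotProduct, Finset.sum_mul]
  exact Finset.sum_congr rfl fun k _ => by ring

lemma my_vecMulVec_mulVec (u w v : Fin d → ℝ) :
    vecMulVec u w *ᵥ v = (w ⬝ᵥ v) • u := by
  ext i
  simp only [Matrix.mulVec, vecMulVec_apply, dotProduct, Pi.smul_apply, smul_eq_mul,
    Finset.sum_mul]
  exact Finset.sum_congr rfl fun k _ => by ring

lemma my_trace_mul_vecMulVec (M : Matrix (Fin d) (Fin d) ℝ) (u v : Fin d → ℝ) :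
    Matrix.trace (M * vecMulVec u v) = v ⬝ᵥ (M *ᵥ u) := by
  simp only [Matrix.trace, Matrix.diag, Matrix.mul_apply, vecMulVec_apply, dotProduct,
    Matrix.mulVec]
  refine Finset.sum_congr rfl fun i _ => ?_
  rw [Finset.mul_sum]
  refine Finset.sum_congr rfl fun j _ => ?_
  ring

lemma my_det_smul_one_add_vecMulVec (hd : 0 < d) {c : ℝ} (hc : c ≠ 0) (u v : Fin d → ℝ) :
    (c • (1 : Matrix (Fin d) (Fin d) ℝ) + vecMulVec u v).det
      = c ^ (d - 1) * (c + v ⬝ᵥ u) := by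
  have h1 : c • (1 : Matrix (Fin d) (Fin d) ℝ) + vecMulVec u v
      = c • ((1 : Matrix (Fin d) (Fin d) ℝ) + vecMulVec (c⁻¹ • u) v) := by
    rw [smul_add, my_smul_vecMulVec, smul_smul, mul_inv_cancel₀ hc, one_smul]
  rw [h1, Matrix.det_smul, Matrix.vecMulVec_eq Unit, Matrix.det_one_add_replicateCol_mul_replicateRow,
    dotProduct_smul]
  have h2 : (c : ℝ) ^ Fintype.card (Fin d) = c ^ (d - 1) * c := by
    rw [Fintype.card_fin, ← pow_succ, Nat.sub_add_cancel hd]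
  rw [Fintype.card_fin] at *
  have : c ^ d = c ^ (d-1) * c := by rw [← pow_succ, Nat.sub_add_cancel hd]
  rw [this]
  field_simp
  rw [smul_eq_mul, mul_add, mul_one, ← mul_assoc, one_div, mul_inv_cancel₀ hc, one_mul]

lemma my_perturb_ub (n : ℕ) (a ε : ℝ) (hε : 0 < ε)
    (h : ∀ t : ℝ, 0 < t → t ≤ ε → (1 - t) ^ n * (1 + t * a) ≤ 1) : a ≤ n := by
  by_contra hcon
  push_neg at hcon
  have hn0 : (0:ℝ) ≤ n := Nat.cast_nonneg n
  have ha0 : 0 < a := lt_of_le_of_lt hn0 hcon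
  have hden : (0:ℝ) < n * a + 1 := by positivity
  set t : ℝ := min (min ε 1) ((a - n) / (n * a + 1)) with ht
  have ht1 : t ≤ 1 := le_trans (min_le_left _ _) (min_le_right _ _)
  have htε : t ≤ ε := le_trans (min_le_left _ _) (min_le_left _ _)
  have htq : t ≤ (a - n) / (n * a + 1) := min_le_right _ _
  have ht0 : 0 < t := by
    apply lt_min (lt_min hε one_pos)
    apply div_pos (by linarith) hden
  have hq : t * (n * a + 1) ≤ a - n := by
    rw [← le_div_iff₀ hden]; exact htq
  have hber : 1 - (n:ℝ) * t ≤ (1 - t) ^ n := by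
    have := one_add_mul_le_pow (show (-2:ℝ) ≤ -t by linarith) n
    have h2 : (1 : ℝ) + (n:ℝ) * (-t) = 1 - n * t := by ring
    have h3 : (1 : ℝ) + (-t) = 1 - t := by ring
    rw [h2, h3] at this
    exact this
  have hpos : (0:ℝ) ≤ 1 + t * a := by nlinarith
  have hle : (1 - (n:ℝ) * t) * (1 + t * a) ≤ 1 := by
    calc (1 - (n:ℝ) * t) * (1 + t * a) ≤ (1 - t)^n * (1 + t * a) :=
          mul_le_mul_of_nonneg_right hber hpos
      _ ≤ 1 := h t ht0 htε
  nlinarith [mul_le_mul_of_nonneg_left hq (le_of_lt ht0), sq_nonneg t]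

lemma my_perturb_lb (n : ℕ) (b ε : ℝ) (hb : -1 ≤ b) (hε : 0 < ε)
    (h : ∀ s : ℝ, 0 < s → s ≤ ε → (1 + s) ^ n * (1 - s * b) ≤ 1) : (n:ℝ) ≤ b := by
  by_contra hcon
  push_neg at hcon
  set B : ℝ := |b| with hB
  have hbB : b ≤ B := le_abs_self b
  have hbB' : -B ≤ b := neg_abs_le b
  have hB0 : 0 ≤ B := abs_nonneg b
  have hden : (0:ℝ) < n * B + 1 := by positivity
  set s : ℝ := min (min ε (1/(B+1))) ((n - b) / (n * B + 1)) with hs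
  have hsε : s ≤ ε := le_trans (min_le_left _ _) (min_le_left _ _)
  have hsB : s ≤ 1/(B+1) := le_trans (min_le_left _ _) (min_le_right _ _)
  have hsq : s ≤ (n - b) / (n * B + 1) := min_le_right _ _
  have hs0 : 0 < s := by
    apply lt_min (lt_min hε (by positivity))
    apply div_pos (by linarith) hden
  have hq : s * (n * B + 1) ≤ n - b := by
    rw [← le_div_iff₀ hden]; exact hsq
  have hsb1 : s * (B + 1) ≤ 1 := by
    rw [← le_div_iff₀ (by positivity : (0:ℝ) < B + 1)]
    simpa [div_eq_mul_inv] using hsB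
  have hpos : (0:ℝ) ≤ 1 - s * b := by nlinarith
  have hber : 1 + (n:ℝ) * s ≤ (1 + s) ^ n :=
    one_add_mul_le_pow (show (-2:ℝ) ≤ s by linarith) n
  have hle : (1 + (n:ℝ) * s) * (1 - s * b) ≤ 1 := by
    calc (1 + (n:ℝ) * s) * (1 - s * b) ≤ (1 + s)^n * (1 - s * b) :=
          mul_le_mul_of_nonneg_right hber hpos
      _ ≤ 1 := h s hs0 hsε
  have hn0 : (0:ℝ) ≤ n := Nat.cast_nonneg n
  nlinarith [mul_le_mul_of_nonneg_left hq (le_of_lt hs0), sq_nonneg s,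
    mul_le_mul_of_nonneg_left hbB (mul_nonneg (mul_nonneg hn0 (le_of_lt hs0)) (le_of_lt hs0))]
variable {d : ℕ}

lemma my_posSemidef_vecMulVec (x : Fin d → ℝ) : (vecMulVec x x).PosSemidef := by
  refine Matrix.PosSemidef.of_dotProduct_mulVec_nonneg ?_ ?_
  · ext i j
    simp [Matrix.conjTranspose_apply, vecMulVec_apply, mul_comm]
  · intro v
    have h1 : vecMulVec x x *ᵥ v = (x ⬝ᵥ v) • x := by
      ext i
      simp only [Matrix.mulVec, vecMulVec_apply, dotProduct, Pi.smul_apply, smul_eq_mul,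
        Finset.mul_sum]
      rw [Finset.sum_mul]
      exact Finset.sum_congr rfl fun k _ => by ring
    rw [h1]
    simp only [star_trivial, dotProduct_smul, smul_eq_mul]
    have : v ⬝ᵥ x = x ⬝ᵥ v := dotProduct_comm v x
    rw [this]
    exact mul_self_nonneg _

lemma my_posSemidef_smul {A : Matrix (Fin d) (Fin d) ℝ} (hA : A.PosSemidef) {c : ℝ}
    (hc : 0 ≤ c) : (c • A).PosSemidef := by
  refine Matrix.PosSemidef.of_dotProduct_mulVec_nonneg ?_ ?_
  · ext i j
    simp only [Matrix.conjTranspose_apply, Matrix.smul_apply, star_trivial, smul_eq_mul]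
    rw [← hA.1.apply i j]
    simp
  · intro v
    have : (c • A) *ᵥ v = c • (A *ᵥ v) := smul_mulVec c A v
    rw [this]
    simp only [star_trivial, dotProduct_smul, smul_eq_mul]
    exact mul_nonneg hc (by simpa using hA.dotProduct_mulVec_nonneg v)

lemma my_convex_posSemidef :
    Convex ℝ {A : Matrix (Fin d) (Fin d) ℝ | A.PosSemidef} := by
  intro A hA B hB a b ha hb _
  exact (my_posSemidef_smul hA ha).add (my_posSemidef_smul hB hb)

lemma my_posDef_of_det_ne_zero {A : Matrix (Fin d) (Fin d) ℝ} (hA : A.PosSemidef)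
    (hdet : A.det ≠ 0) : A.PosDef := by
  refine Matrix.PosDef.of_dotProduct_mulVec_pos hA.1 fun v hv => ?_
  have h0 : 0 ≤ star v ⬝ᵥ A *ᵥ v := hA.dotProduct_mulVec_nonneg v
  rcases eq_or_lt_of_le h0 with h | h
  · exfalso
    have := (hA.dotProduct_mulVec_zero_iff v).mp h.symm
    exact hdet ((Matrix.exists_mulVec_eq_zero_iff).mp ⟨v, hv, this⟩)
  · exact h
variable {d : ℕ}

lemma my_card_le_pairs :
    (Finset.univ.filter fun p : Fin d × Fin d => p.1 ≤ p.2).card = d * (d + 1) / 2 := by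
  classical
  set E := Finset.univ.filter fun p : Fin d × Fin d => p.1 ≤ p.2 with hE
  set G := Finset.univ.filter fun p : Fin d × Fin d => p.2 ≤ p.1 with hG
  have hcardEG : E.card = G.card := by
    apply Finset.card_bij' (fun p _ => Prod.swap p) (fun p _ => Prod.swap p)
    · intro p hp
      simp only [hE, hG, Finset.mem_filter, Finset.mem_univ, true_and] at hp ⊢
      simpa using hp
    · intro p hp
      simp only [hE, hG, Finset.mem_filter, Finset.mem_univ, true_and] at hp ⊢
      simpa using hp
    · intro p _; simp
    · intro p _; simp
  have hunion : E ∪ G = Finset.univ := by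
    ext p
    simp only [hE, hG, Finset.mem_union, Finset.mem_filter, Finset.mem_univ, true_and]
    exact iff_of_true (le_total p.1 p.2) trivial
  have hinter : E ∩ G = Finset.univ.filter fun p : Fin d × Fin d => p.1 = p.2 := by
    ext p
    simp only [hE, hG, Finset.mem_inter, Finset.mem_filter, Finset.mem_univ, true_and]
    exact ⟨fun h => le_antisymm h.1 h.2, fun h => ⟨le_of_eq h, le_of_eq h.symm⟩⟩
  have himg : (Finset.univ.filter fun p : Fin d × Fin d => p.1 = p.2)
      = Finset.univ.image (fun i : Fin d => (i, i)) := by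
    ext p
    simp only [Finset.mem_filter, Finset.mem_univ, true_and, Finset.mem_image]
    constructor
    · intro h
      refine ⟨p.1, ?_⟩
      rw [Prod.ext_iff]
      exact ⟨rfl, h⟩
    · rintro ⟨i, rfl⟩
      rfl
  have hdiag : (Finset.univ.filter fun p : Fin d × Fin d => p.1 = p.2).card = d := by
    rw [himg, Finset.card_image_of_injective _ (fun i j h => by
      simpa [Prod.ext_iff] using h)]
    simp
  have hsum : E.card + G.card = d * d + d := by
    have := Finset.card_union_add_card_inter E G
    rw [hunion, hinter, hdiag] at this
    simpa [Finset.card_univ] using this.symm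
  have hdd : d * (d + 1) = d * d + d := by ring
  omega

noncomputable def myB (p : Fin d × Fin d) : Matrix (Fin d) (Fin d) ℝ :=
  Matrix.single p.1 p.2 1 + Matrix.single p.2 p.1 1

lemma myB_swap (p : Fin d × Fin d) : myB p.swap = myB p := by
  simp [myB, add_comm]

noncomputable def myS : Finset (Matrix (Fin d) (Fin d) ℝ) :=
  (Finset.univ.filter fun p : Fin d × Fin d => p.1 ≤ p.2).image myB

lemma my_card_S : (myS (d := d)).card ≤ d * (d + 1) / 2 :=
  le_trans Finset.card_image_le (le_of_eq my_card_le_pairs)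

lemma myB_mem_S (p : Fin d × Fin d) : myB p ∈ (myS (d := d)) := by
  rcases le_total p.1 p.2 with h | h
  · exact Finset.mem_image_of_mem _ (by simp [h])
  · rw [← myB_swap]
    exact Finset.mem_image_of_mem _ (by simp [h])

lemma my_vecMulVec_mem_span (x : Fin d → ℝ) :
    vecMulVec x x ∈ Submodule.span ℝ ((myS (d := d) : Set (Matrix (Fin d) (Fin d) ℝ))) := by
  classical
  have hrepr : vecMulVec x x = ∑ p : Fin d × Fin d, (x p.1 * x p.2 / 2) • myB p := by
    ext a b
    rw [Matrix.sum_apply]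
    have hterm : ∀ p : Fin d × Fin d,
        ((x p.1 * x p.2 / 2) • myB p) a b
          = (if p = (a, b) then x a * x b / 2 else 0)
            + (if p = (b, a) then x a * x b / 2 else 0) := by
      intro p
      simp only [Matrix.smul_apply, myB, Matrix.add_apply, smul_eq_mul,
        Matrix.single, Matrix.of_apply, Prod.ext_iff]
      by_cases hab : a = b
      · subst hab
        by_cases h1 : p.1 = a ∧ p.2 = a
        · obtain ⟨e1, e2⟩ := h1
          simp [e1, e2]
          ring
        · have h2 : ¬(p.2 = a ∧ p.1 = a) := fun hc => h1 ⟨hc.2, hc.1⟩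
          simp [h1, h2]
      · have hba : ¬ b = a := fun h => hab h.symm
        by_cases h1 : p.1 = a ∧ p.2 = b
        · obtain ⟨e1, e2⟩ := h1
          have h2 : ¬(p.2 = a ∧ p.1 = b) := by
            rw [e1, e2]; exact fun hc => hba hc.1
          simp [e1, e2, hab, hba] <;> ring
        · by_cases h2 : p.2 = a ∧ p.1 = b
          · obtain ⟨e1, e2⟩ := h2
            simp [e1, e2, hab, hba] <;> ring
          · have h2' : ¬(p.1 = b ∧ p.2 = a) := fun hc => h2 ⟨hc.2, hc.1⟩
            simp [h1, h2']
            exact fun e1 e2 => absurd ⟨e1, e2⟩ h2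
    rw [Finset.sum_congr rfl fun p _ => hterm p, Finset.sum_add_distrib,
      Finset.sum_ite_eq' Finset.univ ((a, b) : Fin d × Fin d) (fun _ => x a * x b / 2),
      Finset.sum_ite_eq' Finset.univ ((b, a) : Fin d × Fin d) (fun _ => x a * x b / 2)]
    simp [vecMulVec_apply]
    try ring
  rw [hrepr]
  exact Submodule.sum_mem _ fun p _ =>
    Submodule.smul_mem _ _ (Submodule.subset_span (myB_mem_S p))

lemma my_sum_extend {ι κ γ : Type*} [Fintype ι] [Fintype κ] [DecidableEq κ] [AddCommMonoid γ]
    (f : ι ↪ κ) (g : ι → γ) : ∑ j : κ, Function.extend f g 0 j = ∑ i : ι, g i := by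
  classical
  have h1 : ∑ j : κ, Function.extend f g 0 j
      = ∑ j ∈ Finset.univ.image f, Function.extend f g 0 j := by
    refine (Finset.sum_subset (Finset.subset_univ _) fun j _ hj => ?_).symm
    refine Function.extend_apply' g (0 : κ → γ) j fun ⟨i, hi⟩ => hj ?_
    exact Finset.mem_image.mpr ⟨i, Finset.mem_univ i, hi⟩
  rw [h1, Finset.sum_image (fun i _ j _ h => f.injective h)]
  exact Finset.sum_congr rfl fun i _ => f.injective.extend_apply g 0 i

noncomputable def myQuad (v : Fin d → ℝ) : Matrix (Fin d) (Fin d) ℝ →ₗ[ℝ] ℝ where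
  toFun A := v ⬝ᵥ A *ᵥ v
  map_add' A B := by rw [Matrix.add_mulVec, dotProduct_add]
  map_smul' c A := by
    rw [Matrix.smul_mulVec, dotProduct_smul, smul_eq_mul, RingHom.id_apply, smul_eq_mul]

lemma myQuad_apply (v : Fin d → ℝ) (A : Matrix (Fin d) (Fin d) ℝ) :
    myQuad v A = v ⬝ᵥ A *ᵥ v := rfl

lemma myQuad_vecMulVec (v x : Fin d → ℝ) : myQuad v (vecMulVec x x) = (x ⬝ᵥ v) ^ 2 := by
  rw [myQuad_apply, my_vecMulVec_mulVec, dotProduct_smul, smul_eq_mul, dotProduct_comm]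
  ring

noncomputable def myDotLin (v : Fin d → ℝ) : (Fin d → ℝ) →ₗ[ℝ] ℝ where
  toFun y := y ⬝ᵥ v
  map_add' a b := by rw [add_dotProduct]
  map_smul' c a := by
    rw [smul_dotProduct, smul_eq_mul, RingHom.id_apply, smul_eq_mul]

noncomputable def myPsi (M₀ : Matrix (Fin d) (Fin d) ℝ) :
    Matrix (Fin d) (Fin d) ℝ →ₗ[ℝ] ℝ where
  toFun A := Matrix.trace (M₀ * A)
  map_add' A B := by rw [Matrix.mul_add, Matrix.trace_add]
  map_smul' c A := by
    rw [Matrix.mul_smul, Matrix.trace_smul, RingHom.id_apply, smul_eq_mul]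
set_option maxHeartbeats 1000000

/-- G-optimal design (Kiefer–Wolfowitz, Lemma D.2): for a compact spanning `X ⊆ ℝ^d` there is a
probability distribution supported on at most `d(d+1)/2` points of `X` whose second-moment
matrix `V` is invertible and satisfies `x'ᵀ V⁻¹ x' ≤ d` for all `x' ∈ X`. -/
theorem stmt_10 (d : ℕ) (hd : 0 < d) (X : Set (Fin d → ℝ))
    (hX : IsCompact X) (hspan : Submodule.span ℝ X = ⊤) :
    ∃ (T : Finset (Fin d → ℝ)) (w : (Fin d → ℝ) → ℝ),
      ↑T ⊆ X ∧ T.card ≤ d * (d + 1) / 2 ∧ (∀ x ∈ T, 0 ≤ w x) ∧ (∑ x ∈ T, w x) = 1 ∧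
      (∑ x ∈ T, w x • Matrix.vecMulVec x x).det ≠ 0 ∧
      ∀ x' ∈ X, x' ⬝ᵥ ((∑ x ∈ T, w x • Matrix.vecMulVec x x)⁻¹ *ᵥ x') ≤ (d : ℝ) := by
  classical
  set F : (Fin d → ℝ) → Matrix (Fin d) (Fin d) ℝ := fun x => vecMulVec x x with hFdef
  have hF : Continuous F := by
    apply continuous_matrix
    intro i j
    simp only [hFdef, vecMulVec_apply]
    exact (continuous_apply i).mul (continuous_apply j)
  -- X is nonempty
  have hXne : X.Nonempty := by
    rcases Set.eq_empty_or_nonempty X with he | hne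
    · exfalso
      rw [he, Submodule.span_empty] at hspan
      have h1 : (1 : Fin d → ℝ) ∈ (⊥ : Submodule ℝ (Fin d → ℝ)) := by rw [hspan]; trivial
      have h1' : (1 : Fin d → ℝ) = 0 := h1
      have := congrFun h1' ⟨0, hd⟩
      norm_num at this
    · exact hne
  obtain ⟨x₀, hx₀⟩ := hXne
  set K := convexHull ℝ (F '' X) with hKdef
  have hKconv : Convex ℝ K := convex_convexHull ℝ _
  -- K is compact
  set N := Module.finrank ℝ (Matrix (Fin d) (Fin d) ℝ) + 1 with hNdef
  set Φ : (Fin N → ℝ) × (Fin N → Fin d → ℝ) → Matrix (Fin d) (Fin d) ℝ :=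
    fun q => ∑ i : Fin N, q.1 i • F (q.2 i) with hΦdef
  set D := (stdSimplex ℝ (Fin N)) ×ˢ (Set.univ.pi fun _ : Fin N => X) with hDdef
  have hD : IsCompact D := (isCompact_stdSimplex (𝕜 := ℝ) (ι := Fin N)).prod (isCompact_univ_pi fun _ => hX)
  have hΦ : Continuous Φ := by
    apply continuous_finset_sum
    intro i _
    exact ((continuous_apply i).comp continuous_fst).smul
      (hF.comp ((continuous_apply i).comp continuous_snd))
  have hKD : K = Φ '' D := by
    apply Set.Subset.antisymm
    · intro A hA
      obtain ⟨ι, hfin, z, w, hrange, hai, hwpos, hwsum, hzsum⟩ :=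
        eq_pos_convex_span_of_mem_convexHull hA
      have hcard : Fintype.card ι ≤ N := by
        have h1 := hai.card_le_finrank_succ
        have h2 : Module.finrank ℝ (vectorSpan ℝ (Set.range z))
            ≤ Module.finrank ℝ (Matrix (Fin d) (Fin d) ℝ) := Submodule.finrank_le _
        omega
      set emb : ι ↪ Fin N :=
        (Fintype.equivFin ι).toEmbedding.trans (Fin.castLEEmb hcard) with hembdef
      choose ξ hξX hξF using fun i => hrange (Set.mem_range_self (f := z) i)
      set ws : Fin N → ℝ := Function.extend emb w 0 with hwsdef
      set xs : Fin N → (Fin d → ℝ) := Function.extend emb ξ (fun _ => x₀) with hxsdef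
      have hws0 : ∀ j, 0 ≤ ws j := by
        intro j
        by_cases hj : ∃ i, emb i = j
        · obtain ⟨i, rfl⟩ := hj
          rw [hwsdef, emb.injective.extend_apply]
          exact le_of_lt (hwpos i)
        · rw [hwsdef, Function.extend_apply' _ _ _ hj]
          rfl
      have hwssum : ∑ j : Fin N, ws j = 1 := by
        rw [hwsdef, my_sum_extend]
        exact hwsum
      have hxsX : ∀ j, xs j ∈ X := by
        intro j
        by_cases hj : ∃ i, emb i = j
        · obtain ⟨i, rfl⟩ := hj
          rw [hxsdef, emb.injective.extend_apply]
          exact hξX i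
        · rw [hxsdef, Function.extend_apply' _ _ _ hj]
          exact hx₀
      have hΦeq : Φ (ws, xs) = A := by
        rw [hΦdef]
        have hterm : ∀ j : Fin N,
            ws j • F (xs j) = Function.extend emb (fun i => w i • z i) 0 j := by
          intro j
          by_cases hj : ∃ i, emb i = j
          · obtain ⟨i, rfl⟩ := hj
            rw [hwsdef, hxsdef, emb.injective.extend_apply, emb.injective.extend_apply,
              emb.injective.extend_apply, hξF i]
          · have h1 : ws j = 0 := by
              rw [hwsdef, Function.extend_apply' _ _ _ hj]; rfl
            have h2 : Function.extend (⇑emb) (fun i => w i • z i) 0 j = 0 := by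
              rw [Function.extend_apply' _ _ _ hj]; rfl
            rw [h1, h2, zero_smul]
        calc ∑ j : Fin N, ws j • F (xs j)
            = ∑ j : Fin N, Function.extend emb (fun i => w i • z i) 0 j :=
              Finset.sum_congr rfl fun j _ => hterm j
          _ = ∑ i : ι, w i • z i := my_sum_extend emb _
          _ = A := hzsum
      exact ⟨(ws, xs), ⟨⟨hws0, hwssum⟩, fun j _ => hxsX j⟩, hΦeq⟩
    · rintro _ ⟨⟨w, xs⟩, ⟨⟨hw0, hw1⟩, hxs⟩, rfl⟩
      apply hKconv.sum_mem (fun i _ => hw0 i) hw1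
      intro i _
      exact subset_convexHull ℝ _ (Set.mem_image_of_mem F (hxs i (Set.mem_univ i)))
  have hK : IsCompact K := hKD ▸ hD.image hΦ
  have hKne : K.Nonempty := ⟨F x₀, subset_convexHull ℝ _ (Set.mem_image_of_mem F hx₀)⟩
  obtain ⟨V, hVK, hVmax⟩ := hK.exists_isMaxOn hKne (continuous_id.matrix_det).continuousOn
  have hVmax' : ∀ W ∈ K, W.det ≤ V.det := fun W hW => hVmax hW
  -- every element of K is PSD
  have hKpsd : ∀ A ∈ K, A.PosSemidef := by
    intro A hA
    have hsub : K ⊆ {A : Matrix (Fin d) (Fin d) ℝ | A.PosSemidef} := by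
      apply convexHull_min _ my_convex_posSemidef
      rintro _ ⟨x, -, rfl⟩
      exact my_posSemidef_vecMulVec x
    exact hsub hA
  -- det V > 0
  have hVdet : 0 < V.det := by
    obtain ⟨b, hbX, hbspan, hbli⟩ := exists_linearIndependent ℝ X
    rw [hspan] at hbspan
    have hbfin : b.Finite := hbli.setFinite
    set bF := hbfin.toFinset with hbFdef
    have hbmem : ∀ {x}, x ∈ bF ↔ x ∈ b := fun {x} => hbfin.mem_toFinset
    have hbFne : bF.Nonempty := by
      rcases Finset.eq_empty_or_nonempty bF with he | h
      · exfalso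
        have hbe : b = ∅ := by
          refine Set.eq_empty_iff_forall_notMem.mpr fun x hx => ?_
          have := hbmem.mpr hx
          rw [he] at this
          simp at this
        rw [hbe, Submodule.span_empty] at hbspan
        have h1 : (1 : Fin d → ℝ) ∈ (⊥ : Submodule ℝ (Fin d → ℝ)) := by rw [hbspan]; trivial
        have h1' : (1 : Fin d → ℝ) = 0 := h1
        have := congrFun h1' ⟨0, hd⟩
        norm_num at this
      · exact h
    set n : ℕ := bF.card with hndef
    have hn : 0 < n := Finset.card_pos.mpr hbFne
    set W0 : Matrix (Fin d) (Fin d) ℝ := ∑ x ∈ bF, ((n : ℝ)⁻¹) • F x with hW0def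
    have hW0K : W0 ∈ K := by
      apply hKconv.sum_mem (fun x _ => by positivity)
      · rw [Finset.sum_const, nsmul_eq_mul, ← hndef]
        exact mul_inv_cancel₀ (Nat.cast_ne_zero.mpr hn.ne')
      · intro x hx
        exact subset_convexHull ℝ _ (Set.mem_image_of_mem F (hbX (hbmem.mp hx)))
    have hW0pos : W0.PosDef := by
      refine Matrix.PosDef.of_dotProduct_mulVec_pos (hKpsd W0 hW0K).1 fun v hv => ?_
      have hsum : (star v) ⬝ᵥ W0 *ᵥ v = ∑ x ∈ bF, (n : ℝ)⁻¹ * (x ⬝ᵥ v) ^ 2 := by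
        rw [star_trivial]
        have h2 := map_sum (myQuad v) (fun x => ((n : ℝ)⁻¹) • F x) bF
        have h3 : v ⬝ᵥ W0 *ᵥ v = myQuad v W0 := rfl
        rw [h3, hW0def, h2]
        refine Finset.sum_congr rfl fun x _ => ?_
        rw [_root_.map_smul, myQuad_vecMulVec, smul_eq_mul]
      rw [hsum]
      have hex : ∃ x ∈ bF, x ⬝ᵥ v ≠ 0 := by
        by_contra hno
        push_neg at hno
        have hle : Submodule.span ℝ b ≤ LinearMap.ker (myDotLin v) := by
          rw [Submodule.span_le]
          intro y hy
          exact LinearMap.mem_ker.mpr (hno y (hbmem.mpr hy))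
        have hvmem : v ∈ Submodule.span ℝ b := hbspan ▸ Submodule.mem_top
        have hvv : v ⬝ᵥ v = 0 := hle hvmem
        exact hv ((dotProduct_self_eq_zero).mp hvv)
      obtain ⟨x, hx, hxv⟩ := hex
      refine Finset.sum_pos' (fun y _ => by positivity) ⟨x, hx, ?_⟩
      have h4 : 0 < (x ⬝ᵥ v) ^ 2 := (sq_nonneg _).lt_of_ne (Ne.symm (pow_ne_zero 2 hxv))
      have h5 : (0 : ℝ) < (n : ℝ)⁻¹ := by positivity
      exact mul_pos h5 h4
    exact lt_of_lt_of_le hW0pos.det_pos (hVmax' W0 hW0K)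
  have hVpos : V.PosDef := my_posDef_of_det_ne_zero (hKpsd V hVK) (ne_of_gt hVdet)
  have hVunit : IsUnit V.det := isUnit_iff_ne_zero.mpr (ne_of_gt hVdet)
  have hVinvpos : (V⁻¹).PosDef := hVpos.inv
  -- the key determinant identity
  have hdet_eq : ∀ (t : ℝ), (1 - t) ≠ 0 → ∀ y : Fin d → ℝ,
      ((1 - t) • V + t • F y).det
        = V.det * ((1 - t) ^ (d - 1) * ((1 - t) + t * (y ⬝ᵥ V⁻¹ *ᵥ y))) := by
    intro t ht y
    set u : Fin d → ℝ := V⁻¹ *ᵥ y with hudef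
    have h1 : (1 - t) • V + t • F y
        = V * ((1 - t) • (1 : Matrix (Fin d) (Fin d) ℝ) + vecMulVec (t • u) y) := by
      rw [Matrix.mul_add, Matrix.mul_smul, Matrix.mul_one, my_mul_vecMulVec]
      congr 1
      have h2 : V *ᵥ (t • u) = t • (V *ᵥ u) := Matrix.mulVec_smul V t u
      have h3 : V *ᵥ u = y := by
        rw [hudef, Matrix.mulVec_mulVec, Matrix.mul_nonsing_inv V hVunit, Matrix.one_mulVec]
      rw [h2, h3, hFdef, ← my_smul_vecMulVec]
    rw [h1, Matrix.det_mul, my_det_smul_one_add_vecMulVec hd ht (t • u) y]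
    rw [dotProduct_smul, smul_eq_mul]
  -- Step D: the G-optimality bound for every point of X
  have hgle : ∀ y ∈ X, y ⬝ᵥ V⁻¹ *ᵥ y ≤ (d : ℝ) := by
    intro y hy
    set g : ℝ := y ⬝ᵥ V⁻¹ *ᵥ y with hgdef
    have hkey : ∀ t : ℝ, 0 < t → t ≤ 1/2 → (1 - t) ^ (d - 1) * (1 + t * (g - 1)) ≤ 1 := by
      intro t ht0 ht2
      have ht : (1 : ℝ) - t ≠ 0 := by linarith
      have hWk : (1 - t) • V + t • F y ∈ K := by
        have hFy : F y ∈ K := subset_convexHull ℝ _ (Set.mem_image_of_mem F hy)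
        exact hKconv hVK hFy (by linarith) (le_of_lt ht0) (by ring)
      have hle := hVmax' _ hWk
      rw [hdet_eq t ht y, ← hgdef] at hle
      have h6 : (1 - t) ^ (d - 1) * ((1 - t) + t * g) ≤ 1 := by
        have := (mul_le_mul_iff_right₀ hVdet).mp (by linarith [hle] : V.det * ((1 - t) ^ (d - 1) * ((1 - t) + t * g)) ≤ V.det * 1)
        linarith [this]
      have h7 : (1 - t) + t * g = 1 + t * (g - 1) := by ring
      rw [← h7]
      exact h6
    have hub := my_perturb_ub (d - 1) (g - 1) (1/2) (by norm_num) hkey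
    have hcast : ((d - 1 : ℕ) : ℝ) = (d : ℝ) - 1 := by
      rw [Nat.cast_sub hd]
      norm_num
    rw [hcast] at hub
    linarith
  -- Caratheodory representation of V
  have hVK2 : V ∈ ⋃ (t : Finset (Matrix (Fin d) (Fin d) ℝ)) (_ : ↑t ⊆ F '' X)
      (_ : AffineIndependent ℝ ((↑) : t → Matrix (Fin d) (Fin d) ℝ)), convexHull ℝ ↑t := by
    rw [← convexHull_eq_union]
    exact hVK
  simp only [Set.mem_iUnion] at hVK2
  obtain ⟨t₀, ht₀sub, ht₀ai, hVt₀⟩ := hVK2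
  rw [Finset.mem_convexHull'] at hVt₀
  obtain ⟨c, hc0, hc1, hcV⟩ := hVt₀
  set t₁ : Finset (Matrix (Fin d) (Fin d) ℝ) := t₀.filter (fun A => c A ≠ 0) with ht₁def
  have ht₁sub : ∀ A ∈ t₁, A ∈ F '' X := fun A hA => ht₀sub (Finset.mem_of_mem_filter A hA)
  have hc1' : ∑ A ∈ t₁, c A = 1 := by
    rw [ht₁def, Finset.sum_filter_ne_zero]
    exact hc1
  have hcV' : ∑ A ∈ t₁, c A • A = V := by
    rw [ht₁def, Finset.sum_filter_of_ne]
    · exact hcV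
    · intro A _ hne hc
      exact hne (by rw [hc, zero_smul])
  have hcpos : ∀ A ∈ t₁, 0 < c A := by
    intro A hA
    rcases Finset.mem_filter.mp hA with ⟨hA0, hAne⟩
    exact lt_of_le_of_ne (hc0 A hA0) (Ne.symm hAne)
  have hcle1 : ∀ A ∈ t₁, c A ≤ 1 := by
    intro A hA
    rw [← hc1']
    exact Finset.single_le_sum (fun B hB => le_of_lt (hcpos B hB)) hA
  -- on the support, the trace functional equals d
  have hsupp : ∀ A ∈ t₁, myPsi V⁻¹ A = (d : ℝ) := by
    intro A hA
    obtain ⟨y, hyX, hyF⟩ := ht₁sub A hA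
    set g : ℝ := y ⬝ᵥ V⁻¹ *ᵥ y with hgdef
    have hg0 : 0 ≤ g := by
      have := hVinvpos.posSemidef.dotProduct_mulVec_nonneg y
      rwa [star_trivial] at this
    have hge : (d : ℝ) ≤ g := by
      have hkey : ∀ s : ℝ, 0 < s → s ≤ c A → (1 + s) ^ (d - 1) * (1 - s * (g - 1)) ≤ 1 := by
        intro s hs0 hsle
        have hme : (1 : ℝ) - (-s) ≠ 0 := by linarith
        have hWeq : (1 - (-s)) • V + (-s) • F y = (1 + s) • V - s • A := by
          rw [hyF]
          have hb : (1 : ℝ) - (-s) = 1 + s := by ring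
          rw [hb, neg_smul, ← sub_eq_add_neg]
        have hrepr : ∑ B ∈ t₁, ((1 + s) * c B - (if B = A then s else 0)) • B
            = (1 + s) • V - s • A := by
          have hsplit : ∀ B ∈ t₁, ((1 + s) * c B - (if B = A then s else 0)) • B
              = ((1 + s) * c B) • B - (if B = A then s • B else 0) := by
            intro B _
            by_cases hBA : B = A <;> simp [hBA, sub_smul]
          rw [Finset.sum_congr rfl hsplit, Finset.sum_sub_distrib,
            Finset.sum_ite_eq' t₁ A (fun B => s • B), if_pos hA]
          have h8 : ∑ B ∈ t₁, ((1 + s) * c B) • B = (1 + s) • ∑ B ∈ t₁, c B • B := by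
            rw [Finset.smul_sum]
            exact Finset.sum_congr rfl fun B _ => by rw [smul_smul]
          rw [h8, hcV']
        have hWt : (1 - (-s)) • V + (-s) • F y ∈ K := by
          rw [hWeq, ← hrepr]
          apply hKconv.sum_mem
          · intro B hB
            by_cases hBA : B = A
            · subst hBA
              have h9 := hcle1 B hB
              have h10 := hcpos B hB
              simp only [if_pos rfl, if_true]
              nlinarith
            · simp only [if_neg hBA, sub_zero]
              have h10 := hcpos B hB
              nlinarith
          · rw [Finset.sum_sub_distrib, Finset.sum_ite_eq' t₁ A (fun _ => s), if_pos hA,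
              ← Finset.mul_sum, hc1']
            ring
          · intro B hB
            exact subset_convexHull ℝ _ (ht₁sub B hB)
        have hle := hVmax' _ hWt
        rw [hdet_eq (-s) hme y, ← hgdef] at hle
        have h6 : (1 - (-s)) ^ (d - 1) * ((1 - (-s)) + (-s) * g) ≤ 1 := by
          have h5 : V.det * ((1 - (-s)) ^ (d - 1) * ((1 - (-s)) + (-s) * g)) ≤ V.det * 1 := by
            rw [mul_one]
            exact hle
          exact (mul_le_mul_iff_right₀ hVdet).mp h5
        have hb : (1 : ℝ) - (-s) = 1 + s := by ring
        rw [hb] at h6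
        have hb2 : (1 : ℝ) + s + (-s) * g = 1 - s * (g - 1) := by ring
        rw [hb2] at h6
        exact h6
      have hlb := my_perturb_lb (d - 1) (g - 1) (c A) (by linarith) (hcpos A hA) hkey
      have hcast : ((d - 1 : ℕ) : ℝ) = (d : ℝ) - 1 := by
        rw [Nat.cast_sub hd]
        norm_num
      rw [hcast] at hlb
      linarith
    have hle' := hgle y hyX
    have hgd : g = (d : ℝ) := le_antisymm hle' hge
    have h11 : myPsi V⁻¹ A = g := by
      rw [← hyF, hFdef]
      show Matrix.trace (V⁻¹ * vecMulVec y y) = g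
      rw [my_trace_mul_vecMulVec]
    rw [h11, hgd]
  -- cardinality bound via dimension of the symmetric matrices and the trace hyperplane
  have hVpsi : myPsi V⁻¹ V = (d : ℝ) := by
    show Matrix.trace (V⁻¹ * V) = _
    rw [Matrix.nonsing_inv_mul V hVunit, Matrix.trace_one]
    simp
  have hcard : t₁.card ≤ d * (d + 1) / 2 := by
    set U := Submodule.span ℝ ((myS (d := d) : Set (Matrix (Fin d) (Fin d) ℝ))) with hUdef
    set Wk := U ⊓ LinearMap.ker (myPsi V⁻¹) with hWkdef
    have hmemU : ∀ A ∈ t₁, A ∈ U := by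
      intro A hA
      obtain ⟨y, hyX, hyF⟩ := ht₁sub A hA
      rw [← hyF]
      exact my_vecMulVec_mem_span y
    have hVU : V ∈ U := by
      rw [← hcV']
      exact Submodule.sum_mem _ fun A hA => Submodule.smul_mem _ _ (hmemU A hA)
    have hWklt : Wk < U := by
      refine lt_of_le_of_ne inf_le_left fun he => ?_
      have hVWk : V ∈ Wk := by rw [he]; exact hVU
      have h0 : myPsi V⁻¹ V = 0 := (Submodule.mem_inf.mp hVWk).2
      rw [hVpsi] at h0
      exact (Nat.cast_pos.mpr hd).ne' h0
    have hfr : Module.finrank ℝ Wk < Module.finrank ℝ U :=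
      Submodule.finrank_lt_finrank_of_lt hWklt
    have hfrU : Module.finrank ℝ U ≤ d * (d + 1) / 2 :=
      le_trans (finrank_span_finset_le_card (myS (d := d))) my_card_S
    rcases Finset.eq_empty_or_nonempty t₁ with he | hne1
    · rw [he]
      simp
    · have hvs : vectorSpan ℝ ((t₁ : Set (Matrix (Fin d) (Fin d) ℝ))) ≤ Wk := by
        rw [vectorSpan_def, Submodule.span_le]
        intro v hv
        rw [Set.mem_vsub] at hv
        obtain ⟨a, ha, bb, hbb, rfl⟩ := hv
        rw [Finset.mem_coe] at ha hbb
        rw [vsub_eq_sub]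
        refine Submodule.mem_inf.mpr ⟨sub_mem (hmemU a ha) (hmemU bb hbb), ?_⟩
        rw [LinearMap.mem_ker, map_sub, hsupp a ha, hsupp bb hbb, sub_self]
      have hsubset : (t₁ : Set (Matrix (Fin d) (Fin d) ℝ)) ⊆ (t₀ : Set (Matrix (Fin d) (Fin d) ℝ)) := by
        intro x hx
        rw [Finset.mem_coe] at hx ⊢
        exact Finset.mem_of_mem_filter x hx
      have hai1 : AffineIndependent ℝ ((↑) : {x // x ∈ t₁} → Matrix (Fin d) (Fin d) ℝ) :=
        ht₀ai.comp_embedding ⟨Set.inclusion hsubset, Set.inclusion_injective hsubset⟩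
      have hcard1 := hai1.card_le_finrank_succ
      rw [Fintype.card_coe] at hcard1
      have hrange : Set.range ((↑) : {x // x ∈ t₁} → Matrix (Fin d) (Fin d) ℝ)
          = (t₁ : Set (Matrix (Fin d) (Fin d) ℝ)) := Subtype.range_coe
      rw [hrange] at hcard1
      have hle2 : Module.finrank ℝ (vectorSpan ℝ ((t₁ : Set (Matrix (Fin d) (Fin d) ℝ))))
          ≤ Module.finrank ℝ Wk := Submodule.finrank_mono hvs
      omega
  -- packaging
  set pick : Matrix (Fin d) (Fin d) ℝ → (Fin d → ℝ) :=
    fun A => if h : ∃ x ∈ X, F x = A then h.choose else 0 with hpickdef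
  have hpick : ∀ A ∈ t₁, pick A ∈ X ∧ F (pick A) = A := by
    intro A hA
    obtain ⟨y, hy, hyF⟩ := ht₁sub A hA
    have hex : ∃ x ∈ X, F x = A := ⟨y, hy, hyF⟩
    rw [hpickdef]
    simp only [dif_pos hex]
    exact ⟨hex.choose_spec.1, hex.choose_spec.2⟩
  have hpickinj : Set.InjOn pick t₁ := by
    intro A hA B hB h
    rw [Finset.mem_coe] at hA hB
    rw [← (hpick A hA).2, ← (hpick B hB).2, h]
  set T := t₁.image pick with hTdef
  set w : (Fin d → ℝ) → ℝ := fun x => c (F x) with hwdef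
  have hTX : ↑T ⊆ X := by
    intro x hx
    rw [hTdef] at hx
    simp only [Finset.coe_image, Set.mem_image, Finset.mem_coe] at hx
    obtain ⟨A, hA, rfl⟩ := hx
    exact (hpick A hA).1
  have hinj' : ∀ A ∈ t₁, ∀ B ∈ t₁, pick A = pick B → A = B := by
    intro A hA B hB h
    exact hpickinj (Finset.mem_coe.mpr hA) (Finset.mem_coe.mpr hB) h
  have hsum_w : ∑ x ∈ T, w x = 1 := by
    rw [hTdef, Finset.sum_image hinj', ← hc1']
    refine Finset.sum_congr rfl fun A hA => ?_
    rw [hwdef]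
    simp only []
    rw [(hpick A hA).2]
  have hsum_V : ∑ x ∈ T, w x • Matrix.vecMulVec x x = V := by
    rw [hTdef, Finset.sum_image hinj', ← hcV']
    refine Finset.sum_congr rfl fun A hA => ?_
    have h2 := (hpick A hA).2
    have h3 : Matrix.vecMulVec (pick A) (pick A) = F (pick A) := rfl
    rw [hwdef]
    simp only []
    rw [h3, h2]
  have hcardT : T.card ≤ d * (d + 1) / 2 := by
    rw [hTdef, Finset.card_image_of_injOn hpickinj]
    exact hcard
  refine ⟨T, w, hTX, hcardT, ?_, hsum_w, ?_, ?_⟩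
  · intro x hx
    rw [hTdef] at hx
    obtain ⟨A, hA, rfl⟩ := Finset.mem_image.mp hx
    rw [hwdef]
    simp only []
    rw [(hpick A hA).2]
    exact le_of_lt (hcpos A hA)
  · rw [hsum_V]
    exact ne_of_gt hVdet
  · intro x' hx'
    rw [hsum_V]
    exact hgle x' hx'
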